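/- arXiv:1506.06199 — 2 statements merged into one kernel-verified Lean document; each statement's English description precedes it below -/
import Mathlib

section
/- Fix integers n ≥ 3 and δ ≥ 1 and a real constant a_n > 0, and let T(ρ) = ∫_ρ^1 (1−u²)^{(n−4)/2} du. Let (ρ_p)_{p} be a sequence in (0,1) such that ρ_p → 1 and p^{1/δ}(p−1)(1−ρ_p²)^{(n−2)/2} → e for some e ∈ (0, ∞) as p → ∞. Then Λ(ρ_p) := p·binom(p−1, δ)·(a_n T(ρ_p))^δ converges, as p → ∞, to ((e·a_n)/(n−2))^δ / δ!. -/
open Real Filter MeasureTheory intervalIntegral Set Finset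

lemma aux_integrable {r : ℝ} (hr : -1 < r) {s : ℝ} (hs : s ∈ Set.Ioo (0:ℝ) 1) :
    IntervalIntegrable (fun u => (1 - u ^ 2) ^ r) volume s 1 := by
  set C : ℝ := max 1 (2 ^ r) with hC
  have hC1 : (1:ℝ) ≤ C := le_max_left _ _
  have hmaj : IntervalIntegrable (fun u => C * (1 - u) ^ r) volume s 1 := by
    have h0 : IntervalIntegrable (fun x : ℝ => x ^ r) volume (1 - s) 0 :=
      intervalIntegrable_rpow' hr
    have h1 := (h0.comp_sub_left 1)
    simp only [sub_sub_cancel, sub_zero] at h1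
    exact h1.const_mul C
  apply hmaj.mono_fun
  · apply Measurable.aestronglyMeasurable
    fun_prop
  · filter_upwards [ae_restrict_mem measurableSet_uIoc] with x hx
    have hx' : x ∈ Set.Ioc s 1 := by
      rwa [Set.uIoc_of_le hs.2.le] at hx
    have h1x : 0 ≤ 1 - x := by linarith [hx'.2]
    have h2x : (1:ℝ) ≤ 1 + x := by linarith [hs.1.trans hx'.1]
    have h2x' : 1 + x ≤ 2 := by linarith [hx'.2]
    have hb : (1:ℝ) - x ^ 2 = (1 - x) * (1 + x) := by ring
    have hfnn : 0 ≤ (1 - x ^ 2) ^ r := Real.rpow_nonneg (by nlinarith) r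
    rw [Real.norm_of_nonneg hfnn, Real.norm_of_nonneg
      (mul_nonneg (le_trans zero_le_one hC1) (Real.rpow_nonneg h1x r))]
    rw [hb, Real.mul_rpow h1x (by linarith)]
    rw [mul_comm C _]
    apply mul_le_mul_of_nonneg_left _ (Real.rpow_nonneg h1x r)
    rcases le_or_gt 0 r with h | h
    · calc (1 + x) ^ r ≤ 2 ^ r := Real.rpow_le_rpow (by linarith) h2x' h
        _ ≤ C := le_max_right _ _
    · calc (1 + x) ^ r ≤ 1 := Real.rpow_le_one_of_one_le_of_nonpos h2x h.le
        _ ≤ C := hC1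

lemma aux_value (n : ℕ) (hn : 3 ≤ n) {s : ℝ} (hs : s ∈ Set.Ioo (0:ℝ) 1) :
    ∫ u in s..1, u * (1 - u ^ 2) ^ (((n:ℝ) - 4) / 2)
      = (1 - s ^ 2) ^ (((n:ℝ) - 2) / 2) / ((n:ℝ) - 2) := by
  have hn3 : (3:ℝ) ≤ (n:ℝ) := by exact_mod_cast hn
  set r : ℝ := ((n:ℝ) - 4) / 2 with hrdef
  set β : ℝ := ((n:ℝ) - 2) / 2 with hβdef
  have hβpos : 0 < β := by rw [hβdef]; linarith
  have hβr : β - 1 = r := by rw [hβdef, hrdef]; ring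
  have hr : (-1:ℝ) < r := by rw [hrdef]; linarith
  set F : ℝ → ℝ := fun u => -((1 - u ^ 2) ^ β) / ((n:ℝ) - 2) with hF
  have hint : IntervalIntegrable (fun u => u * (1 - u ^ 2) ^ r) volume s 1 :=
    (aux_integrable hr hs).continuousOn_mul continuousOn_id
  have hcont : ContinuousOn F (Set.Icc s 1) := by
    apply ContinuousOn.div_const
    apply ContinuousOn.neg
    apply ContinuousOn.rpow_const (by fun_prop)
    intro x _
    right; exact hβpos.le
  have hderiv : ∀ x ∈ Set.Ioo s 1, HasDerivAt F (x * (1 - x ^ 2) ^ r) x := by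
    intro x hx
    have hxpos : (0:ℝ) < 1 - x ^ 2 := by
      have := hs.1.trans hx.1
      nlinarith [hx.2]
    have h1 : HasDerivAt (fun u : ℝ => 1 - u ^ 2) (-(2 * x)) x := by
      simpa using (hasDerivAt_pow 2 x).const_sub 1
    have h2 : HasDerivAt (fun u : ℝ => (1 - u ^ 2) ^ β)
        (-(2 * x) * β * (1 - x ^ 2) ^ (β - 1)) x :=
      h1.rpow_const (Or.inl hxpos.ne')
    have h3 := (h2.neg).div_const ((n:ℝ) - 2)
    refine h3.congr_deriv ?_
    rw [hβr]
    have hne : (n:ℝ) - 2 ≠ 0 := by linarith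
    field_simp
    rw [hβdef]
    ring
  rw [integral_eq_sub_of_hasDerivAt_of_le hs.2.le hcont hderiv hint]
  have h1 : F 1 = 0 := by
    simp only [hF, one_pow, sub_self]
    rw [Real.zero_rpow hβpos.ne']
    simp
  rw [h1, hF]
  ring



/-- Fix integers `n ≥ 3`, `δ ≥ 1` and a constant `a_n > 0`, and let
`T(ρ) = ∫_ρ^1 (1 - u²)^((n-4)/2) du`. If `(ρ_p) ⊆ (0,1)`, `ρ_p → 1`, and
`p^(1/δ)·(p-1)·(1-ρ_p²)^((n-2)/2) → e ∈ (0,∞)`, then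
`Λ(ρ_p) = p·binom(p-1, δ)·(a_n T(ρ_p))^δ → ((e·a_n)/(n-2))^δ / δ!`. -/
theorem Lambda_tendsto (n δ : ℕ) (hn : 3 ≤ n) (hδ : 1 ≤ δ)
    (a : ℝ) (ha : 0 < a)
    (ρ : ℕ → ℝ) (hρ : ∀ p, ρ p ∈ Set.Ioo (0 : ℝ) 1)
    (hρ1 : Filter.Tendsto ρ Filter.atTop (nhds 1))
    (e : ℝ) (he : 0 < e)
    (hscale : Filter.Tendsto
      (fun p : ℕ => (p : ℝ) ^ ((1 : ℝ) / (δ : ℝ)) * ((p : ℝ) - 1) *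
        (1 - (ρ p) ^ 2) ^ (((n : ℝ) - 2) / 2))
      Filter.atTop (nhds e)) :
    Filter.Tendsto
      (fun p : ℕ => (p : ℝ) * ((p - 1).choose δ : ℝ) *
        (a * ∫ u in (ρ p)..1, (1 - u ^ 2) ^ (((n : ℝ) - 4) / 2)) ^ δ)
      Filter.atTop
      (nhds ((e * a / ((n : ℝ) - 2)) ^ δ / (Nat.factorial δ : ℝ))) := by
  have hδ0 : (δ:ℝ) ≠ 0 := Nat.cast_ne_zero.2 (by omega)
  have hn3 : (3:ℝ) ≤ (n:ℝ) := by exact_mod_cast hn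
  have hn2 : (0:ℝ) < (n:ℝ) - 2 := by linarith
  have hr : (-1:ℝ) < ((n:ℝ) - 4) / 2 := by linarith
  have hBpos : ∀ p, (0:ℝ) < (1 - ρ p ^ 2) ^ (((n:ℝ) - 2) / 2) := by
    intro p
    apply Real.rpow_pos_of_pos
    nlinarith [(hρ p).1, (hρ p).2]
  have hfnn : ∀ p, ∀ x ∈ Set.Icc (ρ p) 1, 0 ≤ (1 - x ^ 2) ^ (((n:ℝ) - 4) / 2) := by
    intro p x hx
    apply Real.rpow_nonneg
    nlinarith [hx.1, hx.2, (hρ p).1]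
  have hTlow : ∀ p, (1 - ρ p ^ 2) ^ (((n:ℝ) - 2) / 2) / ((n:ℝ) - 2)
      ≤ ∫ u in (ρ p)..1, (1 - u ^ 2) ^ (((n:ℝ) - 4) / 2) := by
    intro p
    rw [← aux_value n hn (hρ p)]
    apply integral_mono_on (hρ p).2.le
      ((aux_integrable hr (hρ p)).continuousOn_mul continuousOn_id)
      (aux_integrable hr (hρ p))
    intro x hx
    simp only [id_eq]
    nlinarith [hfnn p x hx, hx.2]
  have hTup : ∀ p, ρ p * (∫ u in (ρ p)..1, (1 - u ^ 2) ^ (((n:ℝ) - 4) / 2))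
      ≤ (1 - ρ p ^ 2) ^ (((n:ℝ) - 2) / 2) / ((n:ℝ) - 2) := by
    intro p
    rw [← aux_value n hn (hρ p), ← intervalIntegral.integral_const_mul]
    apply integral_mono_on (hρ p).2.le
      ((aux_integrable hr (hρ p)).const_mul (ρ p))
      ((aux_integrable hr (hρ p)).continuousOn_mul continuousOn_id)
    intro x hx
    simp only [id_eq]
    exact mul_le_mul_of_nonneg_right hx.1 (hfnn p x hx)
  set q : ℕ → ℝ := fun p => ((n:ℝ) - 2) *
      (∫ u in (ρ p)..1, (1 - u ^ 2) ^ (((n:ℝ) - 4) / 2)) /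
      (1 - ρ p ^ 2) ^ (((n:ℝ) - 2) / 2) with hqdef
  have hq1 : ∀ p, 1 ≤ q p := by
    intro p
    have h := hTlow p
    rw [div_le_iff₀ hn2] at h
    rw [hqdef]
    rw [one_le_div (hBpos p)]
    linarith
  have hq2 : ∀ p, q p ≤ 1 / ρ p := by
    intro p
    have h := hTup p
    rw [le_div_iff₀ hn2] at h
    rw [hqdef, div_le_div_iff₀ (hBpos p) (hρ p).1]
    nlinarith
  have hqlim : Tendsto q atTop (nhds 1) := by
    have hinv : Tendsto (fun p => 1 / ρ p) atTop (nhds 1) := by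
      have := hρ1.inv₀ one_ne_zero
      simpa [one_div] using this
    exact tendsto_of_tendsto_of_tendsto_of_le_of_le tendsto_const_nhds hinv hq1 hq2
  have hDlim : Tendsto
      (fun p : ℕ => ((p:ℝ) ^ ((1:ℝ) / (δ:ℝ)) * ((p:ℝ) - 1) *
        (1 - ρ p ^ 2) ^ (((n:ℝ) - 2) / 2)) * a * (q p / ((n:ℝ) - 2)))
      atTop (nhds (e * a / ((n:ℝ) - 2))) := by
    have h := (hscale.mul_const a).mul (hqlim.div_const ((n:ℝ) - 2))
    rw [show e * a / ((n:ℝ) - 2) = e * a * ((1:ℝ) / ((n:ℝ) - 2)) by ring]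
    exact h
  have hA : Tendsto (fun p : ℕ => (((p - 1).choose δ : ℝ)) / ((p:ℝ) - 1) ^ δ)
      atTop (nhds (1 / (Nat.factorial δ : ℝ))) := by
    have hm : Tendsto (fun p : ℕ => (p:ℝ) - 1) atTop atTop := by
      have := tendsto_atTop_add_const_right atTop (-1:ℝ) tendsto_natCast_atTop_atTop
      simpa [sub_eq_add_neg] using this
    have hprod : Tendsto
        (fun p : ℕ => (∏ i ∈ Finset.range δ, ((((p:ℝ) - 1) - (i:ℝ)) / ((p:ℝ) - 1))) /
          (Nat.factorial δ : ℝ))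
        atTop (nhds ((∏ _i ∈ Finset.range δ, (1:ℝ)) / (Nat.factorial δ : ℝ))) := by
      apply Tendsto.div_const
      apply tendsto_finset_prod
      intro i _
      have h0 : Tendsto (fun p : ℕ => (i:ℝ) / ((p:ℝ) - 1)) atTop (nhds 0) :=
        tendsto_const_nhds.div_atTop hm
      have h1 := (tendsto_const_nhds (x := (1:ℝ))).sub h0
      apply Tendsto.congr' _ (by simpa using h1)
      filter_upwards [eventually_ge_atTop 2] with p hp
      have hp2 : (2:ℝ) ≤ (p:ℝ) := by exact_mod_cast hp
      have hne : ((p:ℝ) - 1) ≠ 0 := by linarith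
      field_simp
    have hev : (fun p : ℕ => (∏ i ∈ Finset.range δ, ((((p:ℝ) - 1) - (i:ℝ)) / ((p:ℝ) - 1))) /
          (Nat.factorial δ : ℝ))
        =ᶠ[atTop] (fun p : ℕ => (((p - 1).choose δ : ℝ)) / ((p:ℝ) - 1) ^ δ) := by
      filter_upwards [eventually_ge_atTop (δ + 2)] with p hp
      have hp1 : 1 ≤ p := by omega
      have hmδ : δ ≤ p - 1 := by omega
      have hp2 : (2:ℝ) ≤ (p:ℝ) := by exact_mod_cast (by omega : 2 ≤ p)
      have hmne : ((p:ℝ) - 1) ≠ 0 := by linarith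
      have hcast : (((p - 1 : ℕ)):ℝ) = (p:ℝ) - 1 := by
        push_cast [hp1]; ring
      have hfact : ((p - 1).choose δ : ℝ) * (Nat.factorial δ : ℝ)
          = ∏ i ∈ Finset.range δ, (((p:ℝ) - 1) - (i:ℝ)) := by
        have h1 : ((p - 1).descFactorial δ : ℝ)
            = (Nat.factorial δ : ℝ) * ((p - 1).choose δ : ℝ) := by
          exact_mod_cast congrArg (Nat.cast (R := ℝ))
            (Nat.descFactorial_eq_factorial_mul_choose (p - 1) δ)
        have h2 : ((p - 1).descFactorial δ : ℝ)
            = ∏ i ∈ Finset.range δ, (((p:ℝ) - 1) - (i:ℝ)) := by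
          rw [Nat.descFactorial_eq_prod_range, Nat.cast_prod]
          apply Finset.prod_congr rfl
          intro i hi
          have hi' : i ≤ p - 1 := le_trans (Finset.mem_range.1 hi).le hmδ
          rw [Nat.cast_sub hi', hcast]
        rw [mul_comm, ← h1, h2]
      rw [Finset.prod_div_distrib, Finset.prod_const, Finset.card_range, ← hfact]
      have hfne : (Nat.factorial δ : ℝ) ≠ 0 := Nat.cast_ne_zero.2 δ.factorial_ne_zero
      field_simp
    exact Tendsto.congr' hev (by simpa using hprod)
  have hfin := hA.mul (hDlim.pow δ)
  rw [show (e * a / ((n:ℝ) - 2)) ^ δ / (Nat.factorial δ : ℝ)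
      = 1 / (Nat.factorial δ : ℝ) * (e * a / ((n:ℝ) - 2)) ^ δ by ring]
  apply Tendsto.congr' _ hfin
  filter_upwards [eventually_ge_atTop (δ + 2)] with p hp
  have hp2 : (2:ℝ) ≤ (p:ℝ) := by exact_mod_cast (by omega : 2 ≤ p)
  have hmne : ((p:ℝ) - 1) ≠ 0 := by linarith
  have hppos : (0:ℝ) ≤ (p:ℝ) := Nat.cast_nonneg p
  have hBne : (1 - ρ p ^ 2) ^ (((n:ℝ) - 2) / 2) ≠ 0 := (hBpos p).ne'
  have hq' : q p / ((n:ℝ) - 2)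
      = (∫ u in (ρ p)..1, (1 - u ^ 2) ^ (((n:ℝ) - 4) / 2)) /
        (1 - ρ p ^ 2) ^ (((n:ℝ) - 2) / 2) := by
    rw [hqdef]
    field_simp
  have hpow : ((p:ℝ) ^ ((1:ℝ) / (δ:ℝ))) ^ δ = (p:ℝ) := by
    rw [← Real.rpow_natCast ((p:ℝ) ^ ((1:ℝ) / (δ:ℝ))) δ, ← Real.rpow_mul hppos,
      one_div, inv_mul_cancel₀ hδ0, Real.rpow_one]
  rw [hq']
  have h2 : ((p:ℝ) ^ ((1:ℝ) / (δ:ℝ)) * ((p:ℝ) - 1) *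
        (1 - ρ p ^ 2) ^ (((n:ℝ) - 2) / 2)) * a *
        ((∫ u in (ρ p)..1, (1 - u ^ 2) ^ (((n:ℝ) - 4) / 2)) /
          (1 - ρ p ^ 2) ^ (((n:ℝ) - 2) / 2))
      = (p:ℝ) ^ ((1:ℝ) / (δ:ℝ)) *
        (((p:ℝ) - 1) * (a * ∫ u in (ρ p)..1, (1 - u ^ 2) ^ (((n:ℝ) - 4) / 2))) := by
    field_simp
  rw [h2, mul_pow, hpow, mul_pow]
  have hpne : ((p:ℝ) - 1) ^ δ ≠ 0 := pow_ne_zero δ hmne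
  field_simp
end

section
/- Fix an integer n ≥ 3, a constant C > 0, and J > 0 with J ≠ 1. Let T(ρ) = ∫_ρ^1 (1−u²)^{(n−4)/2} du, f_V(ρ; J) = (C/2)(1−ρ²)^{(n−4)/2} J exp(−(C/2) J T(ρ)), and w₀ = (C/2)T(0). Then the Kullback–Leibler-type integral satisfies ∫_0^1 f_V(ρ; J) log( f_V(ρ; J) / f_V(ρ; 1) ) dρ = (1 − e^{−J w₀}) log J − ((J−1)/J)(1 − e^{−J w₀}(1 + J w₀)). -/
open MeasureTheory Set intervalIntegral

lemma aux_g_int (n : ℕ) (hn : 3 ≤ n) :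
    IntervalIntegrable (fun u : ℝ => (1 - u ^ 2) ^ (((n : ℝ) - 4) / 2)) volume 0 1 := by
  set e : ℝ := ((n : ℝ) - 4) / 2 with he
  have hbound : IntervalIntegrable (fun u : ℝ => (1 - u) ^ (-(1/2) : ℝ)) volume 0 1 := by
    have h := (intervalIntegrable_rpow' (by norm_num : (-1 : ℝ) < -(1/2))
      (a := 0) (b := 1)).comp_sub_left 1
    simpa using h.symm
  rw [intervalIntegrable_iff_integrableOn_Ioc_of_le zero_le_one,
    integrableOn_Ioc_iff_integrableOn_Ioo]
  have hbound' : IntegrableOn (fun u : ℝ => (1 - u) ^ (-(1/2) : ℝ)) (Ioo 0 1) volume := by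
    have := (intervalIntegrable_iff_integrableOn_Ioc_of_le zero_le_one).1 hbound
    rw [integrableOn_Ioc_iff_integrableOn_Ioo] at this
    exact this
  have hmeas : AEStronglyMeasurable (fun u : ℝ => (1 - u ^ 2) ^ e)
      (volume.restrict (Ioo (0:ℝ) 1)) := by
    apply ContinuousOn.aestronglyMeasurable _ measurableSet_Ioo
    intro x hx
    have hx1 : (0:ℝ) < 1 - x ^ 2 := by nlinarith [hx.1, hx.2]
    have hc : ContinuousAt (fun u : ℝ => 1 - u ^ 2) x := by fun_prop
    exact (hc.rpow_const (Or.inl hx1.ne')).continuousWithinAt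
  refine MeasureTheory.Integrable.mono hbound' hmeas ?_
  filter_upwards [ae_restrict_mem measurableSet_Ioo] with u hu
  have h0 : (0:ℝ) < 1 - u := by linarith [hu.2]
  have h1 : (0:ℝ) < 1 + u := by linarith [hu.1]
  have h2 : (0:ℝ) < 1 - u ^ 2 := by nlinarith
  rw [Real.norm_eq_abs, Real.norm_eq_abs, abs_of_nonneg (Real.rpow_nonneg h2.le _),
    abs_of_nonneg (Real.rpow_nonneg h0.le _)]
  have hfac : (1 - u ^ 2) = (1 - u) * (1 + u) := by ring
  rw [hfac, Real.mul_rpow h0.le h1.le]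
  rcases lt_or_ge n 4 with h4 | h4
  · -- n = 3, e = -1/2
    interval_cases n
    have hee : e = -(1/2) := by norm_num [he]
    rw [hee]
    calc (1 - u) ^ (-(1/2):ℝ) * (1 + u) ^ (-(1/2):ℝ)
        ≤ (1 - u) ^ (-(1/2):ℝ) * 1 := by
          apply mul_le_mul_of_nonneg_left _ (Real.rpow_nonneg h0.le _)
          exact Real.rpow_le_one_of_one_le_of_nonpos (by linarith [hu.1]) (by norm_num)
      _ = (1 - u) ^ (-(1/2):ℝ) := mul_one _
  · -- e ≥ 0
    have hee : (0:ℝ) ≤ e := by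
      rw [he]
      have : (4:ℝ) ≤ (n:ℝ) := by exact_mod_cast h4
      linarith
    calc (1 - u) ^ e * (1 + u) ^ e = (1 - u ^ 2) ^ e := by
          rw [hfac, Real.mul_rpow h0.le h1.le]
      _ ≤ 1 := Real.rpow_le_one h2.le (by nlinarith [hu.1, hu.2]) hee
      _ ≤ (1 - u) ^ (-(1/2):ℝ) :=
          Real.one_le_rpow_of_pos_of_le_one_of_nonpos h0 (by linarith [hu.1]) (by norm_num)

/-- Fix `n ≥ 3`, `C > 0`, `J > 0` with `J ≠ 1`; let
`T(ρ) = ∫_ρ^1 (1 - u²)^((n-4)/2) du`,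
`f_V(ρ; J) = (C/2)(1-ρ²)^((n-4)/2) J exp(-(C/2) J T(ρ))`, and `w₀ = (C/2)T(0)`.
Then `∫_0^1 f_V(ρ; J) log(f_V(ρ; J)/f_V(ρ; 1)) dρ
  = (1 - e^(-J w₀)) log J - ((J-1)/J)(1 - e^(-J w₀)(1 + J w₀))`. -/
theorem KL_divergence_formula (n : ℕ) (hn : 3 ≤ n) (C J : ℝ) (hC : 0 < C)
    (hJ : 0 < J) (hJ1 : J ≠ 1) :
    let T : ℝ → ℝ := fun r => ∫ u in r..1, (1 - u ^ 2) ^ (((n : ℝ) - 4) / 2)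
    let f : ℝ → ℝ → ℝ := fun ρ J' => C / 2 * (1 - ρ ^ 2) ^ (((n : ℝ) - 4) / 2) * J' *
      Real.exp (-(C / 2) * J' * T ρ)
    let w₀ : ℝ := C / 2 * T 0
    (∫ ρ in (0 : ℝ)..1, f ρ J * Real.log (f ρ J / f ρ 1)) =
      (1 - Real.exp (-J * w₀)) * Real.log J -
        (J - 1) / J * (1 - Real.exp (-J * w₀) * (1 + J * w₀)) := by
  intro T f w₀
  set e : ℝ := ((n : ℝ) - 4) / 2 with he
  set g : ℝ → ℝ := fun u => (1 - u ^ 2) ^ e with hg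
  have hg_int : IntervalIntegrable g volume 0 1 := aux_g_int n hn
  -- continuity of T on [0,1]
  have hIcc : IntegrableOn g (uIcc (0:ℝ) 1) volume := by
    rw [uIcc_of_le zero_le_one]
    exact (intervalIntegrable_iff_integrableOn_Icc_of_le zero_le_one).1 hg_int
  have hTcont : ContinuousOn T (Icc 0 1) := by
    have := continuousOn_primitive_interval_left (f := g) (μ := volume) (a := 0) (b := 1) hIcc
    rwa [uIcc_of_le zero_le_one] at this
  have hT1 : T 1 = 0 := intervalIntegral.integral_same
  -- derivative of T
  have hTderiv : ∀ r ∈ Ioo (0:ℝ) 1, HasDerivAt T (-(g r)) r := by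
    intro r hr
    have hint : IntervalIntegrable g volume 1 r := by
      apply hg_int.mono_set
      apply uIcc_subset_uIcc <;> rw [uIcc_of_le zero_le_one]
      · exact ⟨zero_le_one, le_refl 1⟩
      · exact ⟨hr.1.le, hr.2.le⟩
    have hcontat : ContinuousAt g r := by
      have hx1 : (0:ℝ) < 1 - r ^ 2 := by nlinarith [hr.1, hr.2]
      have hc : ContinuousAt (fun u : ℝ => 1 - u ^ 2) r := by fun_prop
      exact hc.rpow_const (Or.inl hx1.ne')
    have hmeas : StronglyMeasurableAtFilter g (nhds r) volume := by
      refine ContinuousOn.stronglyMeasurableAtFilter isOpen_Ioo ?_ r hr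
      exact fun x hx => (by
        have hx1 : (0:ℝ) < 1 - x ^ 2 := by nlinarith [hx.1, hx.2]
        have hc : ContinuousAt (fun u : ℝ => 1 - u ^ 2) x := by fun_prop
        exact (hc.rpow_const (Or.inl hx1.ne')).continuousWithinAt)
    have hD : HasDerivAt (fun x => ∫ u in (1:ℝ)..x, g u) (g r) r :=
      intervalIntegral.integral_hasDerivAt_right hint hmeas hcontat
    have hTeq : T = fun x => -∫ u in (1:ℝ)..x, g u := by
      funext x
      exact intervalIntegral.integral_symm 1 x
    rw [hTeq]
    exact hD.neg
  -- F and its derivative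
  set F : ℝ → ℝ := fun r =>
    Real.exp (-(C / 2) * J * T r) *
      (Real.log J - C / 2 * (J - 1) * (T r + 1 / (C / 2 * J))) with hF
  set h₀ : ℝ → ℝ := fun r =>
    g r * (C / 2 * J * Real.exp (-(C / 2) * J * T r) *
      (Real.log J - C / 2 * (J - 1) * T r)) with hh₀
  have hFcont : ContinuousOn F (Icc 0 1) := by
    apply ContinuousOn.mul
    · exact Real.continuous_exp.comp_continuousOn (continuousOn_const.mul hTcont)
    · exact continuousOn_const.sub
        (continuousOn_const.mul (hTcont.add continuousOn_const))
  have hFderiv : ∀ r ∈ Ioo (0:ℝ) 1, HasDerivAt F (h₀ r) r := by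
    intro r hr
    have ht := hTderiv r hr
    have h1 : HasDerivAt (fun x => -(C / 2) * J * T x) (-(C / 2) * J * -(g r)) r := by
      have := (ht.const_mul J).const_mul (-(C/2))
      simpa [mul_assoc] using this
    have h2 : HasDerivAt (fun x => Real.exp (-(C / 2) * J * T x))
        (Real.exp (-(C / 2) * J * T r) * (-(C / 2) * J * -(g r))) r := h1.exp
    have h3 : HasDerivAt (fun x => Real.log J - C / 2 * (J - 1) * (T x + 1 / (C / 2 * J)))
        (-(C / 2 * (J - 1) * -(g r))) r := by
      have := ((ht.add_const (1 / (C / 2 * J))).const_mul (C / 2 * (J - 1))).const_sub (Real.log J)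
      simpa using this
    have h4 := h2.mul h3
    refine h4.congr_deriv ?_
    rw [hh₀]
    have hA : C / 2 * J ≠ 0 := by positivity
    field_simp
    ring
  -- integrand equals h₀ on [0,1]
  have heq : EqOn (fun ρ => f ρ J * Real.log (f ρ J / f ρ 1)) h₀ (uIcc (0:ℝ) 1) := by
    intro r hr
    rw [uIcc_of_le zero_le_one] at hr
    by_cases hgr : g r = 0
    · simp only [f, h₀, hh₀]
      rw [show (1 - r ^ 2) ^ e = g r from rfl, hgr]
      ring
    · have hg0 : 0 ≤ g r := Real.rpow_nonneg (by nlinarith [hr.1, hr.2]) _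
      have hgpos : 0 < g r := lt_of_le_of_ne hg0 (Ne.symm hgr)
      have hfJ : f r J = C / 2 * g r * J * Real.exp (-(C / 2) * J * T r) := rfl
      have hf1 : f r 1 = C / 2 * g r * 1 * Real.exp (-(C / 2) * 1 * T r) := rfl
      have hne : C / 2 * g r * 1 * Real.exp (-(C / 2) * 1 * T r) ≠ 0 := by positivity
      have hexp : Real.exp (-(C / 2) * J * T r) =
          Real.exp (-(C / 2) * (J - 1) * T r) * Real.exp (-(C / 2) * 1 * T r) := by
        rw [← Real.exp_add]; congr 1; ring
      have hratio : f r J / f r 1 = J * Real.exp (-(C / 2) * (J - 1) * T r) := by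
        rw [hfJ, hf1, div_eq_iff hne, hexp]; ring
      show f r J * Real.log (f r J / f r 1) = h₀ r
      rw [hratio, Real.log_mul hJ.ne' (Real.exp_ne_zero _), Real.log_exp, hfJ, hh₀]
      ring
  -- integrability of h₀
  have hφcont : ContinuousOn (fun r => C / 2 * J * Real.exp (-(C / 2) * J * T r) *
      (Real.log J - C / 2 * (J - 1) * T r)) (uIcc (0:ℝ) 1) := by
    rw [uIcc_of_le zero_le_one]
    apply ContinuousOn.mul
    · exact continuousOn_const.mul
        (Real.continuous_exp.comp_continuousOn (continuousOn_const.mul hTcont))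
    · exact continuousOn_const.sub (continuousOn_const.mul hTcont)
  have hh₀int : IntervalIntegrable h₀ volume 0 1 := hg_int.mul_continuousOn hφcont
  -- put it together
  rw [intervalIntegral.integral_congr heq]
  rw [intervalIntegral.integral_eq_sub_of_hasDeriv_right_of_le zero_le_one hFcont
    (fun x hx => (hFderiv x hx).hasDerivWithinAt) hh₀int]
  -- final algebra
  rw [hF]
  simp only [hT1, mul_zero, Real.exp_zero, zero_add]
  have hw : -J * w₀ = -(C / 2) * J * T 0 := by
    show -J * (C / 2 * T 0) = _
    ring
  rw [hw]
  have hA : C / 2 * J ≠ 0 := by positivity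
  show 1 * (Real.log J - C / 2 * (J - 1) * (1 / (C / 2 * J))) -
      Real.exp (-(C / 2) * J * T 0) *
        (Real.log J - C / 2 * (J - 1) * (T 0 + 1 / (C / 2 * J))) =
    (1 - Real.exp (-(C / 2) * J * T 0)) * Real.log J -
      (J - 1) / J * (1 - Real.exp (-(C / 2) * J * T 0) * (1 + J * (C / 2 * T 0)))
  field_simp
  ring
end
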